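/- arXiv:2404.18321 — 5 statements merged into one kernel-verified Lean document; each statement's English description precedes it below -/
import Mathlib

section
/- Let N and C be finite nonempty sets, and let M = N → C be the set of semantic maps. Let p be a probability mass function on M that factorizes over cells, p(m) = ∏_{n∈N} p_n(m(n)), where each p_n is a strictly positive probability mass function on C. Let t ≥ 1 and, for each τ ∈ {1,…,t}, let ℓ_τ : M → ℝ be a strictly positive observation likelihood; define the marginal q_τ = ∑_{m∈M} ℓ_τ(m) p(m) and the posterior r_τ(m) = ℓ_τ(m) p(m) / q_τ, and assume each posterior factorizes over cells as r_τ(m) = ∏_{n∈N} r_{τ,n}(m(n)) with each r_{τ,n} a strictly positive probability mass function on C. Then the expected joint log-likelihood decomposes as ∑_{m∈M} p(m) · log(∏_{τ=1}^t ℓ_τ(m)) = ∑_{τ=1}^t ( log q_τ + ∑_{n∈N} ∑_{c∈C} p_n(c) · log( r_{τ,n}(c) / p_n(c) ) ). -/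
open Finset

/-- Marginalization: summing a function of one coordinate against a product pmf. -/
lemma marginal_sum {N C : Type*} [Fintype N] [Fintype C] [DecidableEq N]
    (pn : N → C → ℝ) (hpn_sum : ∀ n, ∑ c, pn n c = 1)
    (n₀ : N) (h : C → ℝ) :
    ∑ m : N → C, (∏ k, pn k (m k)) * h (m n₀) = ∑ c, pn n₀ c * h c := by
  have key : ∀ m : N → C,
      (∏ k, pn k (m k)) * h (m n₀)
        = ∏ k, (pn k (m k) * if k = n₀ then h (m k) else 1) := by
    intro m
    rw [Finset.prod_mul_distrib]
    congr 1
    rw [Finset.prod_ite_eq' Finset.univ n₀ (fun k => h (m k))]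
    simp
  simp_rw [key]
  rw [← Fintype.prod_sum (fun k c => pn k c * if k = n₀ then h c else 1)]
  rw [Fintype.prod_eq_single n₀]
  · simp
  · intro k hk
    simp only [if_neg hk, mul_one, hpn_sum k]

/-- Lemma 1 of the paper: the expected log-likelihood of a sequence of conditionally
independent observations, under a cell-wise independent map distribution `p`, decomposes
into per-observation marginal log-likelihood terms plus per-cell expected log-ratio terms. -/
theorem expected_log_likelihood_cellwise_decomposition
    {N C : Type*} [Fintype N] [Fintype C] [Nonempty N] [Nonempty C]
    [DecidableEq N] [DecidableEq C]
    (p : (N → C) → ℝ) (pn : N → C → ℝ)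
    (hpn_pos : ∀ n c, 0 < pn n c) (hpn_sum : ∀ n, ∑ c, pn n c = 1)
    (hp : ∀ m : N → C, p m = ∏ n, pn n (m n))
    (t : ℕ) (ht : 1 ≤ t)
    (ℓ : ℕ → (N → C) → ℝ) (hℓ_pos : ∀ τ ∈ Finset.range t, ∀ m, 0 < ℓ τ m)
    (q : ℕ → ℝ) (hq : ∀ τ ∈ Finset.range t, q τ = ∑ m : N → C, ℓ τ m * p m)
    (r : ℕ → (N → C) → ℝ) (hr : ∀ τ ∈ Finset.range t, ∀ m, r τ m = ℓ τ m * p m / q τ)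
    (rn : ℕ → N → C → ℝ)
    (hrn_pos : ∀ τ ∈ Finset.range t, ∀ n c, 0 < rn τ n c)
    (hrn_sum : ∀ τ ∈ Finset.range t, ∀ n, ∑ c, rn τ n c = 1)
    (hr_fact : ∀ τ ∈ Finset.range t, ∀ m : N → C, r τ m = ∏ n, rn τ n (m n)) :
    ∑ m : N → C, p m * Real.log (∏ τ ∈ Finset.range t, ℓ τ m)
      = ∑ τ ∈ Finset.range t,
          (Real.log (q τ) + ∑ n, ∑ c, pn n c * Real.log (rn τ n c / pn n c)) := by
  have hp_pos : ∀ m : N → C, 0 < p m := by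
    intro m; rw [hp m]; exact Finset.prod_pos fun n _ => hpn_pos n (m n)
  have hp_sum : ∑ m : N → C, p m = 1 := by
    simp_rw [hp]
    rw [← Fintype.prod_sum]
    simp [hpn_sum]
  have hq_pos : ∀ τ ∈ Finset.range t, 0 < q τ := by
    intro τ hτ
    rw [hq τ hτ]
    exact Finset.sum_pos (fun m _ => mul_pos (hℓ_pos τ hτ m) (hp_pos m)) univ_nonempty
  -- Step 1: log of product = sum of logs, swap sums
  have step1 : ∑ m : N → C, p m * Real.log (∏ τ ∈ Finset.range t, ℓ τ m)
      = ∑ τ ∈ Finset.range t, ∑ m : N → C, p m * Real.log (ℓ τ m) := by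
    rw [Finset.sum_comm]
    congr 1; ext m
    rw [Real.log_prod (fun τ hτ => (hℓ_pos τ hτ m).ne'), Finset.mul_sum]
  rw [step1]
  apply Finset.sum_congr rfl
  intro τ hτ
  -- log ℓ = log q + log r - log p
  have hℓ_eq : ∀ m : N → C, Real.log (ℓ τ m)
      = Real.log (q τ) + (Real.log (r τ m) - Real.log (p m)) := by
    intro m
    have : ℓ τ m = q τ * (r τ m / p m) := by
      rw [eq_comm, hr τ hτ m]
      rw [div_div, mul_div_assoc',
        div_eq_iff (mul_ne_zero (hq_pos τ hτ).ne' (hp_pos m).ne')]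
      ring
    rw [this, Real.log_mul (hq_pos τ hτ).ne' , Real.log_div]
    · have : 0 < r τ m := by
        rw [hr τ hτ m]
        exact div_pos (mul_pos (hℓ_pos τ hτ m) (hp_pos m)) (hq_pos τ hτ)
      exact this.ne'
    · exact (hp_pos m).ne'
    · have hrpos : 0 < r τ m := by
        rw [hr τ hτ m]
        exact div_pos (mul_pos (hℓ_pos τ hτ m) (hp_pos m)) (hq_pos τ hτ)
      exact (div_pos hrpos (hp_pos m)).ne'
  simp_rw [hℓ_eq, mul_add, Finset.sum_add_distrib]
  congr 1
  · rw [← Finset.sum_mul, hp_sum, one_mul]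
  · -- ∑ m, p m * (log r - log p) = ∑ n ∑ c pn * log(rn/pn)
    have expand : ∀ m : N → C, Real.log (r τ m) - Real.log (p m)
        = ∑ n, (Real.log (rn τ n (m n)) - Real.log (pn n (m n))) := by
      intro m
      rw [hr_fact τ hτ m, hp m,
        Real.log_prod (fun n _ => (hrn_pos τ hτ n (m n)).ne'),
        Real.log_prod (fun n _ => (hpn_pos n (m n)).ne'),
        Finset.sum_sub_distrib]
    simp_rw [expand, Finset.mul_sum]
    rw [Finset.sum_comm]
    apply Finset.sum_congr rfl
    intro n _
    have := marginal_sum pn hpn_sum n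
      (fun c => Real.log (rn τ n c) - Real.log (pn n c))
    simp_rw [hp]
    rw [this]
    apply Finset.sum_congr rfl
    intro c _
    rw [Real.log_div (hrn_pos τ hτ n c).ne' (hpn_pos n c).ne']
end

section
/- Let V be a finite nonempty set and H a real inner product space. Let A : V → V → ℝ be symmetric, with nonnegative entries, and row-stochastic (∑_j A i j = 1 for each i). Define φ(x) = (1/2) ∑_{i,j∈V} A i j · ‖x i − x j‖² and G(x) i = 2 ∑_j A i j · (x i − x j), and equip V → H with the ℓ² norm ‖x‖² = ∑_i ‖x i‖². Then for every x : V → H and every ε ∈ ℝ: φ(x − ε·G(x)) ≤ φ(x) − ε(1 − 2ε) · ‖G(x)‖². -/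
/-- Descent inequality for the consensus gradient step (Euclidean instance, `L = 4`):
`φ(x − ε G(x)) ≤ φ(x) − ε(1 − 2ε)‖G(x)‖²`, where the squared ℓ² norm of `G(x)` is
`∑ i ‖G(x) i‖²`. -/
theorem consensus_step_descent_inequality
    {V H : Type*} [Fintype V] [Nonempty V]
    [NormedAddCommGroup H] [InnerProductSpace ℝ H]
    (A : V → V → ℝ) (hA_symm : ∀ i j, A i j = A j i)
    (hA_nonneg : ∀ i j, 0 ≤ A i j) (hA_row : ∀ i, ∑ j, A i j = 1)
    (φ : (V → H) → ℝ)
    (hφ : ∀ x, φ x = (1 / 2 : ℝ) * ∑ i, ∑ j, A i j * ‖x i - x j‖ ^ 2)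
    (G : (V → H) → V → H)
    (hG : ∀ x i, G x i = (2 : ℝ) • ∑ j, A i j • (x i - x j))
    (x : V → H) (ε : ℝ) :
    φ (x - ε • G x) ≤ φ x - ε * (1 - 2 * ε) * ∑ i, ‖G x i‖ ^ 2 := by
  classical
  set g : V → H := G x with hg
  set S : ℝ := ∑ i, ‖g i‖ ^ 2 with hS
  have hgi : ∀ i, ∑ j, A i j • (x i - x j) = (2 : ℝ)⁻¹ • g i := by
    intro i
    rw [hg, hG, smul_smul]
    norm_num
  have hcol : ∀ j, ∑ i, A i j = 1 := by
    intro j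
    calc ∑ i, A i j = ∑ i, A j i := by
          refine Finset.sum_congr rfl fun i _ => hA_symm i j
      _ = 1 := hA_row j
  -- first cross sum
  have h1 : ∑ i, ∑ j, A i j * (inner ℝ (x i - x j) (g i) : ℝ) = (1 / 2) * S := by
    have : ∀ i, ∑ j, A i j * (inner ℝ (x i - x j) (g i) : ℝ) = (1 / 2) * ‖g i‖ ^ 2 := by
      intro i
      have := hgi i
      calc ∑ j, A i j * (inner ℝ (x i - x j) (g i) : ℝ)
          = (inner ℝ (∑ j, A i j • (x i - x j)) (g i) : ℝ) := by
            rw [sum_inner]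
            refine Finset.sum_congr rfl fun j _ => ?_
            rw [real_inner_smul_left]
        _ = (1 / 2) * ‖g i‖ ^ 2 := by
            rw [this, real_inner_smul_left, real_inner_self_eq_norm_sq]
            norm_num
    rw [hS, Finset.mul_sum]
    exact Finset.sum_congr rfl fun i _ => this i
  -- second cross sum
  have h2 : ∑ i, ∑ j, A i j * (inner ℝ (x i - x j) (g j) : ℝ) = -((1 / 2) * S) := by
    have swap : ∑ i, ∑ j, A i j * (inner ℝ (x i - x j) (g j) : ℝ)
        = ∑ i, ∑ j, A i j * (inner ℝ (x j - x i) (g i) : ℝ) := by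
      rw [Finset.sum_comm]
      refine Finset.sum_congr rfl fun j _ => Finset.sum_congr rfl fun i _ => ?_
      rw [hA_symm i j]
    rw [swap, ← h1, ← Finset.sum_neg_distrib]
    refine Finset.sum_congr rfl fun i _ => ?_
    rw [← Finset.sum_neg_distrib]
    refine Finset.sum_congr rfl fun j _ => ?_
    have : x j - x i = -(x i - x j) := by abel
    rw [this, inner_neg_left]
    ring
  -- cross term total
  have hT : ∑ i, ∑ j, A i j * (inner ℝ (x i - x j) (g i - g j) : ℝ) = S := by
    have : ∀ i j, A i j * (inner ℝ (x i - x j) (g i - g j) : ℝ)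
        = A i j * (inner ℝ (x i - x j) (g i) : ℝ) - A i j * (inner ℝ (x i - x j) (g j) : ℝ) := by
      intro i j
      rw [inner_sub_right]; ring
    calc ∑ i, ∑ j, A i j * (inner ℝ (x i - x j) (g i - g j) : ℝ)
        = ∑ i, ∑ j, (A i j * (inner ℝ (x i - x j) (g i) : ℝ) - A i j * (inner ℝ (x i - x j) (g j) : ℝ)) := by
          exact Finset.sum_congr rfl fun i _ => Finset.sum_congr rfl fun j _ => this i j
      _ = (∑ i, ∑ j, A i j * (inner ℝ (x i - x j) (g i) : ℝ))
            - ∑ i, ∑ j, A i j * (inner ℝ (x i - x j) (g j) : ℝ) := by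
          rw [← Finset.sum_sub_distrib]
          exact Finset.sum_congr rfl fun i _ => by rw [Finset.sum_sub_distrib]
      _ = S := by rw [h1, h2]; ring
  -- quadratic term bound
  have hQ : ∑ i, ∑ j, A i j * ‖g i - g j‖ ^ 2 ≤ 4 * S := by
    have hb : ∀ i j, A i j * ‖g i - g j‖ ^ 2
        ≤ A i j * (2 * ‖g i‖ ^ 2 + 2 * ‖g j‖ ^ 2) := by
      intro i j
      refine mul_le_mul_of_nonneg_left ?_ (hA_nonneg i j)
      have h := norm_sub_le (g i) (g j)
      nlinarith [norm_nonneg (g i), norm_nonneg (g j), norm_nonneg (g i - g j), sq_nonneg (‖g i‖ - ‖g j‖)]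
    calc ∑ i, ∑ j, A i j * ‖g i - g j‖ ^ 2
        ≤ ∑ i, ∑ j, A i j * (2 * ‖g i‖ ^ 2 + 2 * ‖g j‖ ^ 2) :=
          Finset.sum_le_sum fun i _ => Finset.sum_le_sum fun j _ => hb i j
      _ = (∑ i, ∑ j, A i j * (2 * ‖g i‖ ^ 2))
            + ∑ i, ∑ j, A i j * (2 * ‖g j‖ ^ 2) := by
          rw [← Finset.sum_add_distrib]
          refine Finset.sum_congr rfl fun i _ => ?_
          rw [← Finset.sum_add_distrib]
          exact Finset.sum_congr rfl fun j _ => by ring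
      _ = 4 * S := by
          have e1 : ∑ i, ∑ j, A i j * (2 * ‖g i‖ ^ 2) = 2 * S := by
            rw [hS, Finset.mul_sum]
            refine Finset.sum_congr rfl fun i _ => ?_
            rw [← Finset.sum_mul, hA_row]; ring
          have e2 : ∑ i, ∑ j, A i j * (2 * ‖g j‖ ^ 2) = 2 * S := by
            rw [Finset.sum_comm, hS, Finset.mul_sum]
            refine Finset.sum_congr rfl fun j _ => ?_
            rw [← Finset.sum_mul, hcol]; ring
          rw [e1, e2]; ring
  -- expand φ at shifted point
  have hexp : φ (x - ε • g)
      = φ x - ε * S + (1 / 2) * ε ^ 2 * ∑ i, ∑ j, A i j * ‖g i - g j‖ ^ 2 := by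
    have hterm : ∀ i j, ‖(x - ε • g) i - (x - ε • g) j‖ ^ 2
        = ‖x i - x j‖ ^ 2 - 2 * ε * (inner ℝ (x i - x j) (g i - g j) : ℝ)
          + ε ^ 2 * ‖g i - g j‖ ^ 2 := by
      intro i j
      have e : (x - ε • g) i - (x - ε • g) j = (x i - x j) - ε • (g i - g j) := by
        simp [smul_sub]
        abel
      rw [e, norm_sub_sq_real, real_inner_smul_right, norm_smul]
      simp [mul_pow]
      ring
    rw [hφ, hφ]
    have : ∑ i, ∑ j, A i j * ‖(x - ε • g) i - (x - ε • g) j‖ ^ 2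
        = (∑ i, ∑ j, A i j * ‖x i - x j‖ ^ 2)
          - 2 * ε * (∑ i, ∑ j, A i j * (inner ℝ (x i - x j) (g i - g j) : ℝ))
          + ε ^ 2 * ∑ i, ∑ j, A i j * ‖g i - g j‖ ^ 2 := by
      rw [Finset.mul_sum (s := Finset.univ) (f := fun i => ∑ j, A i j * (inner ℝ (x i - x j) (g i - g j) : ℝ)),
        Finset.mul_sum (s := Finset.univ) (f := fun i => ∑ j, A i j * ‖g i - g j‖ ^ 2),
        ← Finset.sum_sub_distrib, ← Finset.sum_add_distrib]
      refine Finset.sum_congr rfl fun i _ => ?_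
      rw [Finset.mul_sum, Finset.mul_sum, ← Finset.sum_sub_distrib, ← Finset.sum_add_distrib]
      refine Finset.sum_congr rfl fun j _ => ?_
      rw [hterm i j]; ring
    rw [this, hT]
    ring
  rw [hexp]
  have hε2 : 0 ≤ ε ^ 2 := sq_nonneg ε
  nlinarith [hQ, sq_nonneg ε]
end

section
/- Let V be a finite nonempty set and H a real inner product space. Let A : V → V → ℝ be symmetric, nonnegative, row-stochastic; define φ(x) = (1/2) ∑_{i,j} A i j ‖x i − x j‖², G(x) i = 2 ∑_j A i j (x i − x j), and use the ℓ² norm on V → H. Fix ε ∈ (0, 1/2), α ≥ 0 and C ≥ 0. Let x : V → H, let x̃ = x − ε·G(x), and let x⁺ = x̃ + α·g for some g : V → H with ‖g‖ ≤ C/√|V|. Then (ε/2)(1 − 2ε) · ‖G(x)‖² ≤ φ(x) − φ(x⁺) + α² · ( (1 + 16ε²)/(ε(1 − 2ε)) + 2 ) · C²/|V|. -/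
open scoped RealInnerProductSpace

set_option maxHeartbeats 1000000

/-- Per-iteration inequality (Euclidean instance, `L = 4`) of Step 2 of the proof of
Theorem 1: one consensus gradient step on `φ` followed by a bounded gradient step
decreases `φ` by at least `(ε/2)(1−2ε)‖G(x)‖²` up to an `O(α²)` error. -/
theorem per_iteration_consensus_inequality
    {V H : Type*} [Fintype V] [Nonempty V]
    [NormedAddCommGroup H] [InnerProductSpace ℝ H]
    (A : V → V → ℝ) (hA_symm : ∀ i j, A i j = A j i)
    (hA_nonneg : ∀ i j, 0 ≤ A i j) (hA_row : ∀ i, ∑ j, A i j = 1)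
    (φ : (V → H) → ℝ)
    (hφ : ∀ x, φ x = (1 / 2 : ℝ) * ∑ i, ∑ j, A i j * ‖x i - x j‖ ^ 2)
    (G : (V → H) → V → H)
    (hG : ∀ x i, G x i = (2 : ℝ) • ∑ j, A i j • (x i - x j))
    (ε α C : ℝ) (hε : 0 < ε) (hε' : ε < 1 / 2) (hα : 0 ≤ α) (hC : 0 ≤ C)
    (x g : V → H)
    (hg : Real.sqrt (∑ i, ‖g i‖ ^ 2) ≤ C / Real.sqrt (Fintype.card V))
    (x' : V → H) (hx' : x' = (x - ε • G x) + α • g) :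
    ε / 2 * (1 - 2 * ε) * ∑ i, ‖G x i‖ ^ 2
      ≤ φ x - φ x'
        + α ^ 2 * ((1 + 16 * ε ^ 2) / (ε * (1 - 2 * ε)) + 2) * (C ^ 2 / Fintype.card V) := by
  classical
  set Gx := G x with hGx
  set S := ∑ i, ‖Gx i‖ ^ 2 with hSdef
  set N := ∑ i, ‖g i‖ ^ 2 with hNdef
  set P := ∑ i, ⟪Gx i, g i⟫ with hPdef
  set h : V → H := fun i => (-ε) • Gx i + α • g i with hh
  have hx'' : x' = x + h := by
    rw [hx']; funext i
    simp only [hh, Pi.add_apply, Pi.sub_apply, Pi.smul_apply, neg_smul]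
    abel
  have hcol : ∀ j, ∑ i, A i j = 1 := by
    intro j
    calc ∑ i, A i j = ∑ i, A j i := Finset.sum_congr rfl fun i _ => hA_symm i j
      _ = 1 := hA_row j
  -- gradient pairing identity
  have hGinner : ∀ (v : V → H) (i : V),
      ⟪Gx i, v i⟫ = 2 * ∑ j, A i j * ⟪x i - x j, v i⟫ := by
    intro v i
    rw [hGx, hG, real_inner_smul_left, sum_inner]
    simp_rw [real_inner_smul_left]
  have hcross : ∑ i, ∑ j, A i j * ⟪x i - x j, h i - h j⟫ = ∑ i, ⟪Gx i, h i⟫ := by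
    have hswap : ∑ i, ∑ j, A i j * ⟪x i - x j, h j⟫
        = - ∑ i, ∑ j, A i j * ⟪x i - x j, h i⟫ := by
      rw [Finset.sum_comm, ← Finset.sum_neg_distrib]
      refine Finset.sum_congr rfl fun i _ => ?_
      rw [← Finset.sum_neg_distrib]
      refine Finset.sum_congr rfl fun j _ => ?_
      rw [hA_symm j i, ← neg_sub (x i) (x j), inner_neg_left]
      ring
    calc ∑ i, ∑ j, A i j * ⟪x i - x j, h i - h j⟫
        = ∑ i, ∑ j, (A i j * ⟪x i - x j, h i⟫ - A i j * ⟪x i - x j, h j⟫) := by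
          refine Finset.sum_congr rfl fun i _ => Finset.sum_congr rfl fun j _ => ?_
          rw [inner_sub_right]; ring
      _ = (∑ i, ∑ j, A i j * ⟪x i - x j, h i⟫)
            - ∑ i, ∑ j, A i j * ⟪x i - x j, h j⟫ := by
          simp [Finset.sum_sub_distrib]
      _ = 2 * ∑ i, ∑ j, A i j * ⟪x i - x j, h i⟫ := by rw [hswap]; ring
      _ = ∑ i, ⟪Gx i, h i⟫ := by
          rw [Finset.mul_sum]
          exact Finset.sum_congr rfl fun i _ => (hGinner h i).symm
  -- quadratic expansion of φ
  have hφexp : φ x' = φ x + (∑ i, ⟪Gx i, h i⟫) + φ h := by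
    rw [hx'', hφ (x + h), hφ x, hφ h]
    have point : ∀ i j, ‖(x + h) i - (x + h) j‖ ^ 2
        = ‖x i - x j‖ ^ 2 + 2 * ⟪x i - x j, h i - h j⟫ + ‖h i - h j‖ ^ 2 := by
      intro i j
      have e : (x + h) i - (x + h) j = (x i - x j) + (h i - h j) := by
        simp only [Pi.add_apply]; abel
      rw [e, norm_add_sq_real]
    calc (1/2 : ℝ) * ∑ i, ∑ j, A i j * ‖(x + h) i - (x + h) j‖ ^ 2
        = (1/2 : ℝ) * ∑ i, ∑ j, (A i j * ‖x i - x j‖ ^ 2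
            + A i j * (2 * ⟪x i - x j, h i - h j⟫) + A i j * ‖h i - h j‖ ^ 2) := by
          congr 1
          refine Finset.sum_congr rfl fun i _ => Finset.sum_congr rfl fun j _ => ?_
          rw [point]; ring
      _ = (1/2 : ℝ) * ((∑ i, ∑ j, A i j * ‖x i - x j‖ ^ 2)
            + 2 * (∑ i, ∑ j, A i j * ⟪x i - x j, h i - h j⟫)
            + ∑ i, ∑ j, A i j * ‖h i - h j‖ ^ 2) := by
          have e2 : ∑ i, ∑ j, A i j * (2 * ⟪x i - x j, h i - h j⟫)
              = 2 * ∑ i, ∑ j, A i j * ⟪x i - x j, h i - h j⟫ := by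
            rw [Finset.mul_sum]
            refine Finset.sum_congr rfl fun i _ => ?_
            rw [Finset.mul_sum]
            exact Finset.sum_congr rfl fun j _ => by ring
          simp only [Finset.sum_add_distrib]
          rw [e2]
      _ = _ := by rw [hcross]; ring
  -- smoothness: φ h ≤ 2 ∑ ‖h i‖²
  have hφh : φ h ≤ 2 * ∑ i, ‖h i‖ ^ 2 := by
    rw [hφ h]
    have step : ∑ i, ∑ j, A i j * ‖h i - h j‖ ^ 2
        ≤ ∑ i, ∑ j, A i j * (2 * ‖h i‖ ^ 2 + 2 * ‖h j‖ ^ 2) := by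
      refine Finset.sum_le_sum fun i _ => Finset.sum_le_sum fun j _ => ?_
      refine mul_le_mul_of_nonneg_left ?_ (hA_nonneg i j)
      nlinarith [norm_sub_le (h i) (h j), sq_nonneg (‖h i‖ - ‖h j‖),
        norm_nonneg (h i), norm_nonneg (h j), norm_nonneg (h i - h j)]
    have calcsum : ∑ i, ∑ j, A i j * (2 * ‖h i‖ ^ 2 + 2 * ‖h j‖ ^ 2)
        = 4 * ∑ i, ‖h i‖ ^ 2 := by
      have e1 : ∑ i, ∑ j, A i j * (2 * ‖h i‖ ^ 2) = 2 * ∑ i, ‖h i‖ ^ 2 := by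
        rw [Finset.mul_sum]
        refine Finset.sum_congr rfl fun i _ => ?_
        rw [← Finset.sum_mul, hA_row i]; ring
      have e2 : ∑ i, ∑ j, A i j * (2 * ‖h j‖ ^ 2) = 2 * ∑ i, ‖h i‖ ^ 2 := by
        rw [Finset.sum_comm, Finset.mul_sum]
        refine Finset.sum_congr rfl fun j _ => ?_
        rw [← Finset.sum_mul, hcol j]; ring
      calc ∑ i, ∑ j, A i j * (2 * ‖h i‖ ^ 2 + 2 * ‖h j‖ ^ 2)
          = (∑ i, ∑ j, A i j * (2 * ‖h i‖ ^ 2))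
              + ∑ i, ∑ j, A i j * (2 * ‖h j‖ ^ 2) := by
            simp only [← Finset.sum_add_distrib]
            exact Finset.sum_congr rfl fun i _ => Finset.sum_congr rfl fun j _ => by ring
        _ = 4 * ∑ i, ‖h i‖ ^ 2 := by rw [e1, e2]; ring
    calc (1/2 : ℝ) * ∑ i, ∑ j, A i j * ‖h i - h j‖ ^ 2
        ≤ (1/2 : ℝ) * ∑ i, ∑ j, A i j * (2 * ‖h i‖ ^ 2 + 2 * ‖h j‖ ^ 2) := by linarith
      _ = 2 * ∑ i, ‖h i‖ ^ 2 := by rw [calcsum]; ring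
  -- explicit formulas for the step h
  have hinner : ∑ i, ⟪Gx i, h i⟫ = -ε * S + α * P := by
    have e : ∀ i, ⟪Gx i, h i⟫ = -ε * ‖Gx i‖ ^ 2 + α * ⟪Gx i, g i⟫ := by
      intro i
      rw [hh]
      simp only [inner_add_right, real_inner_smul_right, real_inner_self_eq_norm_sq]
    calc ∑ i, ⟪Gx i, h i⟫ = ∑ i, (-ε * ‖Gx i‖ ^ 2 + α * ⟪Gx i, g i⟫) :=
          Finset.sum_congr rfl fun i _ => e i
      _ = -ε * S + α * P := by
          rw [Finset.sum_add_distrib, ← Finset.mul_sum, ← Finset.mul_sum, hSdef, hPdef]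
  have hnorm : ∑ i, ‖h i‖ ^ 2 = ε ^ 2 * S - 2 * ε * α * P + α ^ 2 * N := by
    have e : ∀ i, ‖h i‖ ^ 2
        = ε ^ 2 * ‖Gx i‖ ^ 2 - 2 * ε * α * ⟪Gx i, g i⟫ + α ^ 2 * ‖g i‖ ^ 2 := by
      intro i
      rw [hh]
      rw [norm_add_sq_real, real_inner_smul_left, real_inner_smul_right,
        norm_smul, norm_smul, mul_pow, mul_pow]
      simp only [Real.norm_eq_abs, abs_neg, abs_of_pos hε, abs_of_nonneg hα, sq_abs]
      ring
    rw [Finset.sum_congr rfl fun i _ => e i]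
    simp only [Finset.sum_add_distrib, Finset.sum_sub_distrib, ← Finset.mul_sum]
    rfl
  -- bound on N
  have hcard : (0 : ℝ) < Fintype.card V := by
    exact_mod_cast Fintype.card_pos
  have hN0 : (0 : ℝ) ≤ N := Finset.sum_nonneg fun i _ => sq_nonneg _
  have hS0 : (0 : ℝ) ≤ S := Finset.sum_nonneg fun i _ => sq_nonneg _
  set D := C ^ 2 / (Fintype.card V : ℝ) with hDdef
  have hD0 : 0 ≤ D := div_nonneg (sq_nonneg _) hcard.le
  have hND : N ≤ D := by
    calc N = Real.sqrt N ^ 2 := (Real.sq_sqrt hN0).symm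
      _ ≤ (C / Real.sqrt (Fintype.card V)) ^ 2 := by
          exact pow_le_pow_left₀ (Real.sqrt_nonneg _) hg 2
      _ = D := by rw [div_pow, Real.sq_sqrt hcard.le]
  -- Cauchy–Schwarz
  have hP : P ^ 2 ≤ S * N := by
    have h1 : |P| ≤ ∑ i, ‖Gx i‖ * ‖g i‖ := by
      refine (Finset.abs_sum_le_sum_abs _ _).trans (Finset.sum_le_sum fun i _ => ?_)
      exact abs_real_inner_le_norm _ _
    have h2 : (∑ i, ‖Gx i‖ * ‖g i‖) ^ 2 ≤ S * N := by
      exact Finset.sum_mul_sq_le_sq_mul_sq Finset.univ (fun i => ‖Gx i‖) fun i => ‖g i‖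
    calc P ^ 2 = |P| ^ 2 := (sq_abs P).symm
      _ ≤ (∑ i, ‖Gx i‖ * ‖g i‖) ^ 2 := pow_le_pow_left₀ (abs_nonneg _) h1 2
      _ ≤ S * N := h2
  -- Young's inequality
  have hlam : 0 < ε * (1 - 2 * ε) := by nlinarith
  set t := α * (1 - 4 * ε) with htdef
  have hY : 2 * (ε * (1 - 2 * ε)) * (t * P)
      ≤ (ε * (1 - 2 * ε)) ^ 2 * S + t ^ 2 * N := by
    set s := Real.sqrt S with hsdef
    set n := Real.sqrt N with hndef
    have hs : s ^ 2 = S := Real.sq_sqrt hS0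
    have hn : n ^ 2 = N := Real.sq_sqrt hN0
    have habs : |P| ≤ s * n := by
      have : Real.sqrt (P ^ 2) ≤ Real.sqrt (S * N) := Real.sqrt_le_sqrt hP
      rwa [Real.sqrt_sq_eq_abs, Real.sqrt_mul hS0, ← hsdef, ← hndef] at this
    have h3 : t * P ≤ |t| * (s * n) := by
      calc t * P ≤ |t * P| := le_abs_self _
        _ = |t| * |P| := abs_mul t P
        _ ≤ |t| * (s * n) := mul_le_mul_of_nonneg_left habs (abs_nonneg t)
    have h4 : 2 * (ε * (1 - 2 * ε)) * (t * P) ≤ 2 * (ε * (1 - 2 * ε)) * (|t| * (s * n)) := by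
      have h5 : (0:ℝ) ≤ 2 * (ε * (1 - 2 * ε)) := by linarith
      exact mul_le_mul_of_nonneg_left h3 h5
    nlinarith [sq_nonneg ((ε * (1 - 2 * ε)) * s - |t| * n), sq_abs t, h4, hs, hn]
  -- assemble
  set K := (1 + 16 * ε ^ 2) / (ε * (1 - 2 * ε)) with hKdef
  have hKe : K * (ε * (1 - 2 * ε)) = 1 + 16 * ε ^ 2 := div_mul_cancel₀ _ (ne_of_gt hlam)
  have hK0 : 0 ≤ K := div_nonneg (by nlinarith) hlam.le
  have h6 : t ^ 2 * N ≤ α ^ 2 * K * (ε * (1 - 2 * ε)) * D := by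
    have e1 : t ^ 2 ≤ α ^ 2 * (1 + 16 * ε ^ 2) := by
      rw [htdef]; nlinarith [sq_nonneg α, mul_nonneg (sq_nonneg α) hε.le]
    have e2 : t ^ 2 * N ≤ α ^ 2 * (1 + 16 * ε ^ 2) * N :=
      mul_le_mul_of_nonneg_right e1 hN0
    have e3 : α ^ 2 * (1 + 16 * ε ^ 2) * N ≤ α ^ 2 * (1 + 16 * ε ^ 2) * D := by
      refine mul_le_mul_of_nonneg_left hND ?_
      positivity
    have e4 : α ^ 2 * K * (ε * (1 - 2 * ε)) * D = α ^ 2 * (1 + 16 * ε ^ 2) * D := by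
      calc α ^ 2 * K * (ε * (1 - 2 * ε)) * D
          = α ^ 2 * (K * (ε * (1 - 2 * ε))) * D := by ring
        _ = α ^ 2 * (1 + 16 * ε ^ 2) * D := by rw [hKe]
    linarith
  have hφ' : ε * (1 - 2 * ε) * S - t * P - 2 * α ^ 2 * N ≤ φ x - φ x' := by
    have : φ x - φ x' = -(∑ i, ⟪Gx i, h i⟫) - φ h := by rw [hφexp]; ring
    rw [this, hinner]
    have := hφh
    rw [hnorm] at this
    rw [htdef]
    nlinarith [this]
  have hmain : 2 * (ε * (1 - 2 * ε)) * (ε / 2 * (1 - 2 * ε) * S)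
      ≤ 2 * (ε * (1 - 2 * ε)) * ((ε * (1 - 2 * ε)) * S - t * P - 2 * α ^ 2 * N
          + α ^ 2 * (K + 2) * D) := by
    have fact1 : 0 ≤ α ^ 2 * (ε * (1 - 2 * ε)) * (D - N) :=
      mul_nonneg (mul_nonneg (sq_nonneg α) hlam.le) (sub_nonneg.2 hND)
    have fact2 : 0 ≤ α ^ 2 * (ε * (1 - 2 * ε)) * K * D :=
      mul_nonneg (mul_nonneg (mul_nonneg (sq_nonneg α) hlam.le) hK0) hD0
    linarith [hY, h6, fact1, fact2]
  have hfinal : ε / 2 * (1 - 2 * ε) * S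
      ≤ (ε * (1 - 2 * ε)) * S - t * P - 2 * α ^ 2 * N + α ^ 2 * (K + 2) * D :=
    le_of_mul_le_mul_left hmain (by positivity)
  calc ε / 2 * (1 - 2 * ε) * S
      ≤ (ε * (1 - 2 * ε)) * S - t * P - 2 * α ^ 2 * N + α ^ 2 * (K + 2) * D := hfinal
    _ ≤ (φ x - φ x') + α ^ 2 * (K + 2) * D := by linarith
end

section
/- Let V be a finite nonempty set and H a real inner product space. Let A : V → V → ℝ be symmetric, nonnegative, row-stochastic; define φ(x) = (1/2) ∑_{i,j} A i j ‖x i − x j‖², G(x) i = 2 ∑_j A i j (x i − x j), and use the ℓ² norm on V → H. Fix ε ∈ (0, 1/2), C ≥ 0, step sizes α_k ≥ 0 with ∑_{k=0}^∞ α_k² < ∞, and directions g^{(k)} : V → H with ‖g^{(k)}‖ ≤ C/√|V| for all k. Define the iteration x^{(k+1)} = (x^{(k)} − ε·G(x^{(k)})) + α_k · g^{(k)} from any initial x^{(0)}. Then (ε/2)(1 − 2ε) · ∑_{k=0}^∞ ‖G(x^{(k)})‖² ≤ φ(x^{(0)}) + (C²/|V|) · ( (1 + 16ε²)/(ε(1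 − 2ε)) + 2 ) · ∑_{k=0}^∞ α_k²; in particular the series ∑_k ‖G(x^{(k)})‖² converges and G(x^{(k)}) → 0 as k → ∞. -/
open Finset

section
variable {V H : Type*} [Fintype V] [NormedAddCommGroup H] [InnerProductSpace ℝ H]

local notation "⟪" a ", " b "⟫" => @inner ℝ _ _ a b

lemma cgv_cross (A : V → V → ℝ) (hA_symm : ∀ i j, A i j = A j i)
    (G : (V → H) → V → H)
    (hG : ∀ x i, G x i = (2 : ℝ) • ∑ j, A i j • (x i - x j))
    (y d : V → H) :
    ∑ i, ∑ j, A i j * ⟪y i - y j, d i - d j⟫ = ∑ i, ⟪G y i, d i⟫ := by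
  have h1 : ∀ i, ⟪G y i, d i⟫ = 2 * ∑ j, A i j * ⟪y i - y j, d i⟫ := by
    intro i
    rw [hG, real_inner_smul_left, sum_inner]
    simp [real_inner_smul_left]
  have h2 : ∑ i, ∑ j, A i j * ⟪y i - y j, d j⟫
      = - ∑ i, ∑ j, A i j * ⟪y i - y j, d i⟫ := by
    rw [Finset.sum_comm, ← Finset.sum_neg_distrib]
    refine Finset.sum_congr rfl fun i _ => ?_
    rw [← Finset.sum_neg_distrib]
    refine Finset.sum_congr rfl fun j _ => ?_
    rw [hA_symm j i]
    have : ⟪y j - y i, d i⟫ = - ⟪y i - y j, d i⟫ := by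
      rw [← inner_neg_left]; congr 1; abel
    rw [this]; ring
  calc ∑ i, ∑ j, A i j * ⟪y i - y j, d i - d j⟫
      = ∑ i, ∑ j, (A i j * ⟪y i - y j, d i⟫ - A i j * ⟪y i - y j, d j⟫) := by
        refine Finset.sum_congr rfl fun i _ => Finset.sum_congr rfl fun j _ => ?_
        rw [inner_sub_right]; ring
    _ = ∑ i, ∑ j, A i j * ⟪y i - y j, d i⟫ - ∑ i, ∑ j, A i j * ⟪y i - y j, d j⟫ := by
        simp [Finset.sum_sub_distrib]
    _ = 2 * ∑ i, ∑ j, A i j * ⟪y i - y j, d i⟫ := by rw [h2]; ring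
    _ = ∑ i, ⟪G y i, d i⟫ := by
        rw [Finset.mul_sum]
        exact Finset.sum_congr rfl fun i _ => (h1 i).symm

end

section
variable {V H : Type*} [Fintype V] [NormedAddCommGroup H] [InnerProductSpace ℝ H]

local notation "⟪" a ", " b "⟫" => @inner ℝ _ _ a b

lemma cgv_quad (A : V → V → ℝ) (hA_symm : ∀ i j, A i j = A j i)
    (φ : (V → H) → ℝ)
    (hφ : ∀ x, φ x = (1 / 2 : ℝ) * ∑ i, ∑ j, A i j * ‖x i - x j‖ ^ 2)
    (G : (V → H) → V → H)
    (hG : ∀ x i, G x i = (2 : ℝ) • ∑ j, A i j • (x i - x j))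
    (y d : V → H) :
    φ (y + d) = φ y + (∑ i, ⟪G y i, d i⟫) + φ d := by
  have key : ∀ i j, ‖(y + d) i - (y + d) j‖ ^ 2
      = ‖y i - y j‖ ^ 2 + 2 * ⟪y i - y j, d i - d j⟫ + ‖d i - d j‖ ^ 2 := by
    intro i j
    have h : (y + d) i - (y + d) j = (y i - y j) + (d i - d j) := by
      simp; abel
    rw [h, norm_add_sq_real]
  have key2 : ∀ i j : V, A i j * ‖(y + d) i - (y + d) j‖ ^ 2
      = A i j * ‖y i - y j‖ ^ 2 + 2 * (A i j * ⟪y i - y j, d i - d j⟫)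
        + A i j * ‖d i - d j‖ ^ 2 := by
    intro i j; rw [key]; ring
  rw [hφ, hφ, hφ, ← cgv_cross A hA_symm G hG y d]
  simp only [key2, Finset.sum_add_distrib]
  rw [Finset.mul_sum]
  have h2 : ∑ i, ∑ j, 2 * (A i j * ⟪y i - y j, d i - d j⟫)
      = 2 * ∑ i, ∑ j, A i j * ⟪y i - y j, d i - d j⟫ := by
    rw [Finset.mul_sum]
    refine Finset.sum_congr rfl fun i _ => ?_
    rw [Finset.mul_sum]
  rw [h2]; ring_nf; rw [← Finset.sum_mul]; ring

lemma cgv_phi_le (A : V → V → ℝ) (hA_symm : ∀ i j, A i j = A j i)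
    (hA_nonneg : ∀ i j, 0 ≤ A i j) (hA_row : ∀ i, ∑ j, A i j = 1)
    (φ : (V → H) → ℝ)
    (hφ : ∀ x, φ x = (1 / 2 : ℝ) * ∑ i, ∑ j, A i j * ‖x i - x j‖ ^ 2)
    (d : V → H) : φ d ≤ 2 * ∑ i, ‖d i‖ ^ 2 := by
  rw [hφ]
  have h1 : ∀ i j : V, A i j * ‖d i - d j‖ ^ 2 ≤ A i j * (2 * ‖d i‖ ^ 2 + 2 * ‖d j‖ ^ 2) := by
    intro i j
    refine mul_le_mul_of_nonneg_left ?_ (hA_nonneg i j)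
    have h := norm_sub_le (d i) (d j)
    have h2 := pow_le_pow_left₀ (norm_nonneg (d i - d j)) h 2
    nlinarith [sq_nonneg (‖d i‖ - ‖d j‖)]
  have h2 : ∑ i, ∑ j, A i j * ‖d i - d j‖ ^ 2
      ≤ ∑ i, ∑ j, A i j * (2 * ‖d i‖ ^ 2 + 2 * ‖d j‖ ^ 2) :=
    Finset.sum_le_sum fun i _ => Finset.sum_le_sum fun j _ => h1 i j
  have hcol : ∀ j, ∑ i, A i j = 1 := by
    intro j; rw [← hA_row j]; exact Finset.sum_congr rfl fun i _ => hA_symm i j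
  have h3 : ∑ i, ∑ j, A i j * (2 * ‖d i‖ ^ 2 + 2 * ‖d j‖ ^ 2) = 4 * ∑ i, ‖d i‖ ^ 2 := by
    simp only [mul_add, Finset.sum_add_distrib]
    have e1 : ∑ i, ∑ j, A i j * (2 * ‖d i‖ ^ 2) = 2 * ∑ i, ‖d i‖ ^ 2 := by
      rw [Finset.mul_sum]
      refine Finset.sum_congr rfl fun i _ => ?_
      rw [← Finset.sum_mul, hA_row]; ring
    have e2 : ∑ i, ∑ j, A i j * (2 * ‖d j‖ ^ 2) = 2 * ∑ i, ‖d i‖ ^ 2 := by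
      rw [Finset.sum_comm, Finset.mul_sum]
      refine Finset.sum_congr rfl fun j _ => ?_
      rw [← Finset.sum_mul, hcol]; ring
    rw [e1, e2]; ring
  linarith

lemma cgv_phi_nonneg (A : V → V → ℝ)
    (hA_nonneg : ∀ i j, 0 ≤ A i j)
    (φ : (V → H) → ℝ)
    (hφ : ∀ x, φ x = (1 / 2 : ℝ) * ∑ i, ∑ j, A i j * ‖x i - x j‖ ^ 2)
    (y : V → H) : 0 ≤ φ y := by
  rw [hφ]
  have : (0:ℝ) ≤ ∑ i, ∑ j, A i j * ‖y i - y j‖ ^ 2 :=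
    Finset.sum_nonneg fun i _ => Finset.sum_nonneg fun j _ =>
      mul_nonneg (hA_nonneg i j) (sq_nonneg _)
  linarith

end

section
variable {V H : Type*} [Fintype V] [Nonempty V] [NormedAddCommGroup H] [InnerProductSpace ℝ H]
local notation "⟪" a ", " b "⟫" => @inner ℝ _ _ a b

set_option maxHeartbeats 1000000 in
lemma cgv_step (A : V → V → ℝ) (hA_symm : ∀ i j, A i j = A j i)
    (hA_nonneg : ∀ i j, 0 ≤ A i j) (hA_row : ∀ i, ∑ j, A i j = 1)
    (φ : (V → H) → ℝ)
    (hφ : ∀ x, φ x = (1 / 2 : ℝ) * ∑ i, ∑ j, A i j * ‖x i - x j‖ ^ 2)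
    (G : (V → H) → V → H)
    (hG : ∀ x i, G x i = (2 : ℝ) • ∑ j, A i j • (x i - x j))
    (ε C : ℝ) (hε : 0 < ε) (hε' : ε < 1 / 2) (hC : 0 ≤ C)
    (α : ℕ → ℝ) (hα_nonneg : ∀ k, 0 ≤ α k)
    (g : ℕ → V → H)
    (hg : ∀ k, Real.sqrt (∑ i, ‖g k i‖ ^ 2) ≤ C / Real.sqrt (Fintype.card V))
    (x : ℕ → V → H)
    (hx : ∀ k, x (k + 1) = (x k - ε • G (x k)) + α k • g k) (k : ℕ) :
    φ (x (k + 1)) ≤ φ (x k) - (ε / 2 * (1 - 2 * ε)) * (∑ i, ‖G (x k) i‖ ^ 2)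
      + C ^ 2 / Fintype.card V * ((1 + 16 * ε ^ 2) / (ε * (1 - 2 * ε)) + 2) * α k ^ 2 := by
  have hδ : 0 < ε * (1 - 2 * ε) := by nlinarith
  set y := x k with hy
  set d : V → H := α k • g k - ε • G y with hd
  have hxd : x (k + 1) = y + d := by rw [hx k, hd]; module
  set a2 := ∑ i, ‖G y i‖ ^ 2 with ha2
  set b2 := ∑ i, ‖g k i‖ ^ 2 with hb2def
  set T := ∑ i, ⟪G y i, g k i⟫ with hT
  have ha2nn : 0 ≤ a2 := Finset.sum_nonneg fun i _ => sq_nonneg _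
  have hb2nn : 0 ≤ b2 := Finset.sum_nonneg fun i _ => sq_nonneg _
  have hcard : (0:ℝ) < Fintype.card V := by
    exact_mod_cast Fintype.card_pos
  have hdi : ∀ i, d i = α k • g k i - ε • G y i := fun i => rfl
  have hS : ∑ i, ⟪G y i, d i⟫ = α k * T - ε * a2 := by
    calc ∑ i, ⟪G y i, d i⟫
        = ∑ i, (α k * ⟪G y i, g k i⟫ - ε * ‖G y i‖ ^ 2) := by
          refine Finset.sum_congr rfl fun i _ => ?_
          rw [hdi, inner_sub_right, real_inner_smul_right, real_inner_smul_right,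
            real_inner_self_eq_norm_sq]
      _ = α k * T - ε * a2 := by
          rw [Finset.sum_sub_distrib, ← Finset.mul_sum, ← Finset.mul_sum]
  have hNd : ∑ i, ‖d i‖ ^ 2 = α k ^ 2 * b2 - 2 * (α k * ε) * T + ε ^ 2 * a2 := by
    have key : ∀ i, ‖d i‖ ^ 2
        = α k ^ 2 * ‖g k i‖ ^ 2 - 2 * (α k * ε) * ⟪G y i, g k i⟫ + ε ^ 2 * ‖G y i‖ ^ 2 := by
      intro i
      rw [hdi, norm_sub_sq_real, real_inner_smul_left, real_inner_smul_right,
        real_inner_comm (g k i), norm_smul, norm_smul]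
      simp only [Real.norm_eq_abs, mul_pow, sq_abs]
      ring
    simp only [key, Finset.sum_add_distrib, Finset.sum_sub_distrib,
      ← Finset.mul_sum]
    rw [← hb2def, ← hT, ← ha2]
  have habs : |T| ≤ Real.sqrt a2 * Real.sqrt b2 := by
    calc |T| ≤ ∑ i, |⟪G y i, g k i⟫| := Finset.abs_sum_le_sum_abs _ _
      _ ≤ ∑ i, ‖G y i‖ * ‖g k i‖ :=
          Finset.sum_le_sum fun i _ => abs_real_inner_le_norm _ _
      _ ≤ Real.sqrt a2 * Real.sqrt b2 := by
          rw [ha2, hb2def]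
          exact Real.sum_mul_le_sqrt_mul_sqrt _ _ _
  have hb2 : b2 ≤ C ^ 2 / Fintype.card V := by
    have h := hg k
    calc b2 = Real.sqrt b2 ^ 2 := (Real.sq_sqrt hb2nn).symm
      _ ≤ (C / Real.sqrt (Fintype.card V)) ^ 2 :=
          pow_le_pow_left₀ (Real.sqrt_nonneg _) h 2
      _ = C ^ 2 / Fintype.card V := by
          rw [div_pow, Real.sq_sqrt hcard.le]
  -- Young step
  set a := Real.sqrt a2 with haa
  set b := Real.sqrt b2 with hbb
  have ha : a ^ 2 = a2 := Real.sq_sqrt ha2nn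
  have hb : b ^ 2 = b2 := Real.sq_sqrt hb2nn
  have hann : 0 ≤ a := Real.sqrt_nonneg _
  have hbnn : 0 ≤ b := Real.sqrt_nonneg _
  set δ := ε * (1 - 2 * ε) with hδdef
  set q := (1 - 4 * ε) ^ 2 / (2 * δ) with hqdef
  have hqnn : 0 ≤ q := by positivity
  have claim : (1 - 4 * ε) * α k * T ≤ δ / 2 * a2 + q * (α k ^ 2 * b2) := by
    set e := |1 - 4 * ε| with he
    have h1 : (1 - 4 * ε) * α k * T ≤ e * α k * (a * b) := by
      calc (1 - 4 * ε) * α k * T ≤ |(1 - 4 * ε) * α k * T| := le_abs_self _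
        _ = e * α k * |T| := by
            rw [abs_mul, abs_mul, abs_of_nonneg (hα_nonneg k)]
        _ ≤ e * α k * (a * b) := by
            refine mul_le_mul_of_nonneg_left habs
              (mul_nonneg (by rw [he]; exact abs_nonneg _) (hα_nonneg k))
    have hq2 : e ^ 2 * (α k * b) ^ 2 = 2 * δ * q * (α k * b) ^ 2 := by
      rw [sq_abs, hqdef]
      field_simp
    have h2 : e * α k * (a * b) ≤ δ / 2 * a ^ 2 + q * (α k ^ 2 * b ^ 2) := by
      have key : 2 * δ * (e * α k * (a * b)) ≤ 2 * δ * (δ / 2 * a ^ 2 + q * (α k ^ 2 * b ^ 2)) := by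
        nlinarith [sq_nonneg (δ * a - e * α k * b), hq2]
      exact le_of_mul_le_mul_left key (by positivity)
    rw [ha, hb] at h2
    linarith
  have hquad := cgv_quad A hA_symm φ hφ G hG y d
  have hφd := cgv_phi_le A hA_symm hA_nonneg hA_row φ hφ d
  rw [hxd, hquad, hS]
  rw [hNd] at hφd
  -- now pure arithmetic
  have hqK : q ≤ (1 + 16 * ε ^ 2) / δ := by
    rw [hqdef, div_le_div_iff₀ (by positivity) hδ]
    have hineq : 0 ≤ δ * (1 + 4 * ε) ^ 2 := mul_nonneg hδ.le (sq_nonneg _)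
    linarith only [hineq]
  have hstep : φ y + (α k * T - ε * a2) + φ d
      ≤ φ y - δ / 2 * a2 + (q + 2) * (α k ^ 2 * b2) := by
    have hδa2 : δ * a2 = (ε - 2 * ε ^ 2) * a2 := by rw [hδdef]; ring
    linarith only [claim, hφd, hδa2]
  have hfinal : (q + 2) * (α k ^ 2 * b2)
      ≤ C ^ 2 / Fintype.card V * ((1 + 16 * ε ^ 2) / δ + 2) * α k ^ 2 := by
    have h1 : (q + 2) * (α k ^ 2 * b2) ≤ (q + 2) * (α k ^ 2 * (C ^ 2 / Fintype.card V)) := by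
      refine mul_le_mul_of_nonneg_left ?_ (by linarith only [hqnn])
      exact mul_le_mul_of_nonneg_left hb2 (sq_nonneg _)
    have h2 : (q + 2) * (α k ^ 2 * (C ^ 2 / Fintype.card V))
        ≤ ((1 + 16 * ε ^ 2) / δ + 2) * (α k ^ 2 * (C ^ 2 / Fintype.card V)) := by
      refine mul_le_mul_of_nonneg_right (by linarith only [hqK]) ?_
      positivity
    calc (q + 2) * (α k ^ 2 * b2) ≤ _ := h1
      _ ≤ _ := h2
      _ = C ^ 2 / Fintype.card V * ((1 + 16 * ε ^ 2) / δ + 2) * α k ^ 2 := by ring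
  have hh : δ / 2 * a2 = ε / 2 * (1 - 2 * ε) * a2 := by rw [hδdef]; ring
  linarith only [hstep, hfinal, hh]

end

/-- Key convergence estimate (Euclidean instance, `L = 4`) of Step 2 of the proof of
Theorem 1: along the iterates of Algorithm 1 with square-summable step sizes and bounded
local gradient directions, the sum `∑ₖ ‖G(x⁽ᵏ⁾)‖²` is finite and bounded by
`φ(x⁽⁰⁾)` plus a step-size term; in particular `G(x⁽ᵏ⁾) → 0`. -/
theorem consensus_gradient_vanishes_along_iterates
    {V H : Type*} [Fintype V] [Nonempty V]
    [NormedAddCommGroup H] [InnerProductSpace ℝ H]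
    (A : V → V → ℝ) (hA_symm : ∀ i j, A i j = A j i)
    (hA_nonneg : ∀ i j, 0 ≤ A i j) (hA_row : ∀ i, ∑ j, A i j = 1)
    (φ : (V → H) → ℝ)
    (hφ : ∀ x, φ x = (1 / 2 : ℝ) * ∑ i, ∑ j, A i j * ‖x i - x j‖ ^ 2)
    (G : (V → H) → V → H)
    (hG : ∀ x i, G x i = (2 : ℝ) • ∑ j, A i j • (x i - x j))
    (ε C : ℝ) (hε : 0 < ε) (hε' : ε < 1 / 2) (hC : 0 ≤ C)
    (α : ℕ → ℝ) (hα_nonneg : ∀ k, 0 ≤ α k) (hα_sq : Summable fun k => (α k) ^ 2)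
    (g : ℕ → V → H)
    (hg : ∀ k, Real.sqrt (∑ i, ‖g k i‖ ^ 2) ≤ C / Real.sqrt (Fintype.card V))
    (x : ℕ → V → H)
    (hx : ∀ k, x (k + 1) = (x k - ε • G (x k)) + α k • g k) :
    (Summable fun k => ∑ i, ‖G (x k) i‖ ^ 2) ∧
    ε / 2 * (1 - 2 * ε) * ∑' k, ∑ i, ‖G (x k) i‖ ^ 2
      ≤ φ (x 0)
        + C ^ 2 / Fintype.card V * ((1 + 16 * ε ^ 2) / (ε * (1 - 2 * ε)) + 2)
          * ∑' k, (α k) ^ 2 ∧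
    Filter.Tendsto (fun k => G (x k)) Filter.atTop (nhds 0) := by
  set u : ℕ → ℝ := fun k => ∑ i, ‖G (x k) i‖ ^ 2 with hu
  set c0 : ℝ := ε / 2 * (1 - 2 * ε) with hc0def
  have hδ : 0 < ε * (1 - 2 * ε) := by nlinarith
  have hc0 : 0 < c0 := by rw [hc0def]; nlinarith
  set K : ℝ := C ^ 2 / Fintype.card V * ((1 + 16 * ε ^ 2) / (ε * (1 - 2 * ε)) + 2) with hKdef
  have hcard : (0:ℝ) < Fintype.card V := by exact_mod_cast Fintype.card_pos
  have hK : 0 ≤ K := by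
    rw [hKdef]
    have h1 : (0:ℝ) ≤ (1 + 16 * ε ^ 2) / (ε * (1 - 2 * ε)) :=
      div_nonneg (by positivity) hδ.le
    have h2 : (0:ℝ) ≤ C ^ 2 / Fintype.card V := by positivity
    nlinarith
  have hunn : ∀ k, 0 ≤ u k := fun k => Finset.sum_nonneg fun i _ => sq_nonneg _
  have hstep : ∀ k, φ (x (k + 1)) ≤ φ (x k) - c0 * u k + K * α k ^ 2 :=
    fun k => cgv_step A hA_symm hA_nonneg hA_row φ hφ G hG ε C hε hε' hC α
      hα_nonneg g hg x hx k
  have hφnn : ∀ y, 0 ≤ φ y := cgv_phi_nonneg A hA_nonneg φ hφ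
  set S : ℝ := ∑' k, (α k) ^ 2 with hS
  have htel : ∀ n, φ (x n) + ∑ k ∈ Finset.range n, c0 * u k
      ≤ φ (x 0) + K * ∑ k ∈ Finset.range n, α k ^ 2 := by
    intro n
    induction n with
    | zero => simp
    | succ n ih =>
      rw [Finset.sum_range_succ, Finset.sum_range_succ]
      have := hstep n
      linarith only [ih, this]
  have hpartS : ∀ n, ∑ k ∈ Finset.range n, α k ^ 2 ≤ S :=
    fun n => Summable.sum_le_tsum _ (fun i _ => sq_nonneg _) hα_sq
  have hpartial : ∀ n, ∑ k ∈ Finset.range n, c0 * u k ≤ φ (x 0) + K * S := by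
    intro n
    have h1 := htel n
    have h2 := hφnn (x n)
    have h3 := mul_le_mul_of_nonneg_left (hpartS n) hK
    linarith only [h1, h2, h3]
  have hsum' : Summable fun k => c0 * u k :=
    summable_of_sum_range_le (fun n => mul_nonneg hc0.le (hunn n)) hpartial
  have hsum : Summable u := (summable_mul_left_iff hc0.ne').mp hsum'
  have htsum : c0 * ∑' k, u k ≤ φ (x 0) + K * S := by
    rw [← tsum_mul_left]
    exact Summable.tsum_le_of_sum_range_le hsum' hpartial
  refine ⟨hsum, htsum, ?_⟩
  have ht : Filter.Tendsto u Filter.atTop (nhds 0) := hsum.tendsto_atTop_zero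
  rw [tendsto_pi_nhds]
  intro i
  have hb : ∀ k, ‖G (x k) i‖ ≤ Real.sqrt (u k) := by
    intro k
    have h1 : ‖G (x k) i‖ ^ 2 ≤ u k :=
      Finset.single_le_sum (f := fun j => ‖G (x k) j‖ ^ 2)
        (fun j _ => sq_nonneg _) (Finset.mem_univ i)
    calc ‖G (x k) i‖ = Real.sqrt (‖G (x k) i‖ ^ 2) :=
          (Real.sqrt_sq (norm_nonneg _)).symm
      _ ≤ Real.sqrt (u k) := Real.sqrt_le_sqrt h1
  have hsq : Filter.Tendsto (fun k => Real.sqrt (u k)) Filter.atTop (nhds 0) := by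
    have := ht.sqrt
    simpa using this
  have : Filter.Tendsto (fun k => G (x k) i) Filter.atTop (nhds 0) := by
    rw [tendsto_zero_iff_norm_tendsto_zero]
    exact squeeze_zero (fun k => norm_nonneg _) hb hsq
  simpa using this
end

section
/- Let V be a finite nonempty set and H a real Hilbert space. Let A : V → V → ℝ be symmetric, nonnegative, row-stochastic; set φ(x) = (1/2) ∑_{i,j} A i j ‖x i − x j‖² and G(x) i = 2 ∑_j A i j (x i − x j). For each i ∈ V let f^i : H → ℝ be concave and differentiable with ‖∇f^i(y)‖ ≤ C for all y ∈ H, and set F(x) = (1/|V|) ∑_i f^i(x i). Fix ε ∈ (0, 1/2) and step sizes α_k > 0 with ∑_{k=0}^∞ α_k = ∞ and ∑_{k=0}^∞ α_k² < ∞. Define iterates from any x^{(0)} : V → H by x̃^{(k)} = x^{(k)} − ε·G(x^{(k)}) and x^{(k+1)} i = x̃^{(k)} i + α_k · ∇f^i(x̃^{(k)} i). Then for every consensus configuration x* : V → H (x* i = x* j for all i, j): F(x*) ≤ sup_{k ∈ ℕ} F(x^{(k)}). -/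
open Finset
open scoped RealInnerProductSpace

lemma concave_grad_ineq {H : Type*} [NormedAddCommGroup H] [InnerProductSpace ℝ H]
    [CompleteSpace H] {f : H → ℝ} {gx : H} {p : H}
    (hconc : ConcaveOn ℝ Set.univ f) (hg : HasGradientAt f gx p) (q : H) :
    f q ≤ f p + ⟪gx, q - p⟫ := by
  set φ : ℝ → ℝ := fun t => f (p + t • (q - p)) with hφ
  have hcurve : ∀ t : ℝ, HasDerivAt (fun s : ℝ => p + s • (q - p)) (q - p) t := by
    intro t
    simpa using ((hasDerivAt_id t).smul_const (q - p)).const_add p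
  have hderiv : HasDerivAt φ ⟪gx, q - p⟫ 0 := by
    have h0 : p + (0 : ℝ) • (q - p) = p := by simp
    have := (h0 ▸ hg.hasFDerivAt).comp_hasDerivAt 0 (hcurve 0)
    simpa [φ, Function.comp_def, InnerProductSpace.toDual_apply_apply] using this
  have hφconc : ConcaveOn ℝ Set.univ φ := by
    have := hconc.comp_affineMap (AffineMap.lineMap p q : ℝ →ᵃ[ℝ] H)
    simp only [Set.preimage_univ] at this
    have e : φ = f ∘ ⇑(AffineMap.lineMap p q : ℝ →ᵃ[ℝ] H) := by
      funext t
      simp [φ, AffineMap.lineMap_apply, add_comm]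
    rw [e]; exact this
  have hconv : ConvexOn ℝ Set.univ (-φ) := hφconc.neg
  have hslope := hconv.le_slope_of_hasDerivAt (Set.mem_univ (0 : ℝ))
    (Set.mem_univ (1 : ℝ)) one_pos hderiv.neg
  have : -⟪gx, q - p⟫ ≤ -φ 1 - (-φ 0) := by
    simpa [slope_def_field] using hslope
  have h0 : φ 0 = f p := by simp [φ]
  have h1 : φ 1 = f q := by simp [φ]
  rw [h0, h1] at this
  linarith

lemma norm_sq_sum_smul_le {V H : Type*} [Fintype V] [NormedAddCommGroup H]
    [InnerProductSpace ℝ H] (w : V → ℝ) (v : V → H)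
    (hw : ∀ j, 0 ≤ w j) (hw1 : ∑ j, w j = 1) :
    ‖∑ j, w j • v j‖ ^ 2 ≤ ∑ j, w j * ‖v j‖ ^ 2 := by
  have h1 : ‖∑ j, w j • v j‖ ≤ ∑ j, w j * ‖v j‖ := by
    refine (norm_sum_le _ _).trans (le_of_eq ?_)
    refine Finset.sum_congr rfl fun j _ => ?_
    rw [norm_smul, Real.norm_eq_abs, abs_of_nonneg (hw j)]
  have h2 : ‖∑ j, w j • v j‖ ^ 2 ≤ (∑ j, w j * ‖v j‖) ^ 2 :=
    pow_le_pow_left₀ (norm_nonneg _) h1 2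
  refine h2.trans ?_
  have hcs := Finset.sum_mul_sq_le_sq_mul_sq Finset.univ
    (fun j => Real.sqrt (w j)) (fun j => Real.sqrt (w j) * ‖v j‖)
  have he1 : ∀ j : V, Real.sqrt (w j) * (Real.sqrt (w j) * ‖v j‖) = w j * ‖v j‖ := by
    intro j; rw [← mul_assoc, Real.mul_self_sqrt (hw j)]
  have he2 : ∀ j : V, Real.sqrt (w j) ^ 2 = w j := fun j => Real.sq_sqrt (hw j)
  have he3 : ∀ j : V, (Real.sqrt (w j) * ‖v j‖) ^ 2 = w j * ‖v j‖ ^ 2 := by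
    intro j; rw [mul_pow, he2]
  calc (∑ j, w j * ‖v j‖) ^ 2
      = (∑ j, Real.sqrt (w j) * (Real.sqrt (w j) * ‖v j‖)) ^ 2 := by
        simp_rw [he1]
    _ ≤ (∑ j, Real.sqrt (w j) ^ 2) * ∑ j, (Real.sqrt (w j) * ‖v j‖) ^ 2 := hcs
    _ = ∑ j, w j * ‖v j‖ ^ 2 := by simp_rw [he2, he3, hw1, one_mul]

/-- Optimality guarantee (part 2 of Theorem 1, Euclidean instance): along the iterates of
Algorithm 1 — interleaving consensus gradient steps on the aggregate distance function with
local concave-objective gradient ascent steps, under Robbins–Monro step sizes and bounded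
local gradients — the running supremum of the averaged objective `F` dominates the value of
`F` at every consensus configuration. -/
theorem distributed_optimization_optimality
    {V H : Type*} [Fintype V] [Nonempty V]
    [NormedAddCommGroup H] [InnerProductSpace ℝ H] [CompleteSpace H]
    (A : V → V → ℝ) (hA_symm : ∀ i j, A i j = A j i)
    (hA_nonneg : ∀ i j, 0 ≤ A i j) (hA_row : ∀ i, ∑ j, A i j = 1)
    (G : (V → H) → V → H)
    (hG : ∀ x i, G x i = (2 : ℝ) • ∑ j, A i j • (x i - x j))
    (C : ℝ) (hC : 0 ≤ C)
    (f : V → H → ℝ) (g : V → H → H)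
    (hconc : ∀ i, ConcaveOn ℝ Set.univ (f i))
    (hgrad : ∀ i y, HasGradientAt (f i) (g i y) y)
    (hbound : ∀ i y, ‖g i y‖ ≤ C)
    (F : (V → H) → ℝ)
    (hF : ∀ x, F x = (1 / Fintype.card V : ℝ) * ∑ i, f i (x i))
    (ε : ℝ) (hε : 0 < ε) (hε' : ε < 1 / 2)
    (α : ℕ → ℝ) (hα_pos : ∀ k, 0 < α k)
    (hα_div : ¬ Summable α) (hα_sq : Summable fun k => (α k) ^ 2)
    (x : ℕ → V → H)
    (hx : ∀ k, x (k + 1)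
      = fun i => (x k - ε • G (x k)) i + α k • g i ((x k - ε • G (x k)) i))
    (xstar : V → H) (hconsensus : ∀ i j, xstar i = xstar j) :
    (F xstar : EReal) ≤ ⨆ k : ℕ, (F (x k) : EReal) := by
  classical
  by_contra hcon
  rw [not_le] at hcon
  obtain ⟨c, hc1, hc2⟩ := exists_between hcon
  have hc_top : c ≠ ⊤ := ne_top_of_lt hc2
  have hc_bot : c ≠ ⊥ :=
    ((EReal.bot_lt_coe (F (x 0))).trans_le
      ((le_iSup (fun k => (F (x k) : EReal)) 0).trans hc1.le)).ne'
  set r : ℝ := c.toReal with hr_def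
  have hrc : (r : EReal) = c := EReal.coe_toReal hc_top hc_bot
  have hub : ∀ k, F (x k) ≤ r := by
    intro k
    have : ((F (x k) : ℝ) : EReal) ≤ (r : EReal) := by
      rw [hrc]; exact (le_iSup (fun k => (F (x k) : EReal)) k).trans hc1.le
    exact_mod_cast this
  have hrlt : r < F xstar := by
    have : (r : EReal) < ((F xstar : ℝ) : EReal) := by rw [hrc]; exact hc2
    exact_mod_cast this
  set n : ℝ := (Fintype.card V : ℝ) with hn_def
  have hn : 0 < n := by
    simp only [hn_def]
    exact_mod_cast Fintype.card_pos
  set δ : ℝ := F xstar - r with hδ_def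
  have hδ : 0 < δ := by rw [hδ_def]; linarith
  have hsumf : ∀ z : V → H, ∑ i, f i (z i) = n * F z := by
    intro z
    rw [hF z]
    have hne : n ≠ 0 := hn.ne'
    field_simp [hn_def]
  set y : ℕ → V → H := fun k => x k - ε • G (x k) with hy_def
  have hxk : ∀ k, x (k + 1) = fun i => y k i + α k • g i (y k i) := hx
  set B : V → V → ℝ := fun i j => 2 * ε * A i j + (if i = j then 1 - 2 * ε else 0)
    with hB_def
  have hB0 : ∀ i j, 0 ≤ B i j := by
    intro i j
    have h1 : 0 ≤ 2 * ε * A i j := by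
      have := hA_nonneg i j; nlinarith
    have h2 : (0:ℝ) ≤ if i = j then 1 - 2 * ε else 0 := by
      split_ifs <;> linarith
    simp only [hB_def]; linarith
  have hBrow : ∀ i, ∑ j, B i j = 1 := by
    intro i
    simp only [hB_def]
    rw [Finset.sum_add_distrib, ← Finset.mul_sum, hA_row i, Finset.sum_ite_eq]
    simp
  have hBcol : ∀ j, ∑ i, B i j = 1 := by
    intro j
    have hAcol : ∑ i, A i j = 1 := by
      simp_rw [fun i => hA_symm i j]; exact hA_row j
    simp only [hB_def]
    rw [Finset.sum_add_distrib, ← Finset.mul_sum, hAcol, Finset.sum_ite_eq']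
    simp
  have hy : ∀ k i, y k i = ∑ j, B i j • x k j := by
    intro k i
    have h1 : ∑ j, A i j • (x k i - x k j) = x k i - ∑ j, A i j • x k j := by
      simp_rw [smul_sub]
      rw [Finset.sum_sub_distrib, ← Finset.sum_smul, hA_row i, one_smul]
    have hsmul : (2 * ε) • ∑ j, A i j • x k j = ∑ j, (2 * ε * A i j) • x k j := by
      rw [Finset.smul_sum]; simp_rw [smul_smul]
    have hlhs : y k i = (1 - 2 * ε) • x k i + (2 * ε) • ∑ j, A i j • x k j := by
      simp only [hy_def, Pi.sub_apply, Pi.smul_apply, hG, h1]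
      module
    have hrhs : ∑ j, B i j • x k j
        = (1 - 2 * ε) • x k i + ∑ j, (2 * ε * A i j) • x k j := by
      simp only [hB_def, add_smul, ite_smul, zero_smul]
      rw [Finset.sum_add_distrib, Finset.sum_ite_eq]
      simp only [Finset.mem_univ, if_true]
      rw [add_comm]
    rw [hlhs, hsmul, hrhs]
  have hyB : ∀ k i, y k i - xstar i = ∑ j, B i j • (x k j - xstar j) := by
    intro k i
    simp_rw [smul_sub]
    rw [Finset.sum_sub_distrib]
    have : ∑ j, B i j • xstar j = xstar i := by
      have : ∀ j, B i j • xstar j = B i j • xstar i := by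
        intro j; rw [hconsensus j i]
      simp_rw [this]
      rw [← Finset.sum_smul, hBrow i, one_smul]
    rw [this, hy k i]
  set D : ℕ → ℝ := fun k => ∑ i, ‖x k i - xstar i‖ ^ 2 with hD_def
  have hD0 : ∀ k, 0 ≤ D k := fun k => Finset.sum_nonneg fun i _ => sq_nonneg _
  have step1 : ∀ k, ∑ i, ‖y k i - xstar i‖ ^ 2 ≤ D k := by
    intro k
    calc ∑ i, ‖y k i - xstar i‖ ^ 2
        = ∑ i, ‖∑ j, B i j • (x k j - xstar j)‖ ^ 2 := by simp_rw [hyB]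
      _ ≤ ∑ i, ∑ j, B i j * ‖x k j - xstar j‖ ^ 2 :=
          Finset.sum_le_sum fun i _ =>
            norm_sq_sum_smul_le (B i) (fun j => x k j - xstar j) (hB0 i) (hBrow i)
      _ = ∑ j, (∑ i, B i j) * ‖x k j - xstar j‖ ^ 2 := by
          rw [Finset.sum_comm]; simp_rw [Finset.sum_mul]
      _ = D k := by simp_rw [hBcol, one_mul]; rfl
  have key : ∀ k, D (k + 1) ≤ D k - (2 * n * δ) * α k + (3 * n * C ^ 2) * (α k) ^ 2 := by
    intro k
    have hper : ∀ i, ‖x (k + 1) i - xstar i‖ ^ 2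
        ≤ ‖y k i - xstar i‖ ^ 2
          + 2 * α k * (f i (x (k + 1) i) - f i (xstar i))
          + 3 * C ^ 2 * (α k) ^ 2 := by
      intro i
      have hxi : x (k + 1) i = y k i + α k • g i (y k i) := by rw [hxk k]
      have hnorm : ‖x (k + 1) i - xstar i‖ ^ 2
          = ‖y k i - xstar i‖ ^ 2
            + 2 * (α k * ⟪g i (y k i), y k i - xstar i⟫)
            + (α k) ^ 2 * ‖g i (y k i)‖ ^ 2 := by
        rw [hxi, add_sub_right_comm, norm_add_sq_real, real_inner_smul_right,
          real_inner_comm, norm_smul, Real.norm_eq_abs, mul_pow, sq_abs]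
      have hinner : ⟪g i (y k i), y k i - xstar i⟫ ≤ f i (y k i) - f i (xstar i) := by
        have h := concave_grad_ineq (hconc i) (hgrad i (y k i)) (xstar i)
        rw [show xstar i - y k i = -(y k i - xstar i) from (neg_sub _ _).symm,
          inner_neg_right] at h
        linarith
      have hup : f i (y k i) ≤ f i (x (k + 1) i) + α k * C ^ 2 := by
        have h := concave_grad_ineq (hconc i) (hgrad i (x (k + 1) i)) (y k i)
        have hd : ‖y k i - x (k + 1) i‖ ≤ α k * C := by
          rw [hxi, show y k i - (y k i + α k • g i (y k i)) = -(α k • g i (y k i)) by abel,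
            norm_neg, norm_smul, Real.norm_eq_abs, abs_of_pos (hα_pos k)]
          exact mul_le_mul_of_nonneg_left (hbound i _) (hα_pos k).le
        have hi2 : ⟪g i (x (k + 1) i), y k i - x (k + 1) i⟫ ≤ C * (α k * C) :=
          (real_inner_le_norm _ _).trans
            (mul_le_mul (hbound i _) hd (norm_nonneg _) hC)
        have : α k * C ^ 2 = C * (α k * C) := by ring
        linarith
      have hgb2 : ‖g i (y k i)‖ ^ 2 ≤ C ^ 2 :=
        pow_le_pow_left₀ (norm_nonneg _) (hbound i _) 2
      have hA1 : α k * ⟪g i (y k i), y k i - xstar i⟫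
          ≤ α k * (f i (y k i) - f i (xstar i)) :=
        mul_le_mul_of_nonneg_left hinner (hα_pos k).le
      have hA2 : α k * (f i (y k i) - f i (xstar i))
          ≤ α k * (f i (x (k + 1) i) + α k * C ^ 2 - f i (xstar i)) :=
        mul_le_mul_of_nonneg_left (by linarith) (hα_pos k).le
      have hA3 : (α k) ^ 2 * ‖g i (y k i)‖ ^ 2 ≤ (α k) ^ 2 * C ^ 2 :=
        mul_le_mul_of_nonneg_left hgb2 (sq_nonneg _)
      linarith [hnorm, hA1, hA2, hA3]
    have hsum_le : ∑ i, (f i (x (k + 1) i) - f i (xstar i)) ≤ -(n * δ) := by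
      rw [Finset.sum_sub_distrib, hsumf (x (k + 1)), hsumf xstar]
      have h1 : n * F (x (k + 1)) ≤ n * r :=
        mul_le_mul_of_nonneg_left (hub (k + 1)) hn.le
      have h2 : n * δ = n * F xstar - n * r := by rw [hδ_def]; ring
      linarith
    calc D (k + 1) = ∑ i, ‖x (k + 1) i - xstar i‖ ^ 2 := rfl
      _ ≤ ∑ i, (‖y k i - xstar i‖ ^ 2
            + 2 * α k * (f i (x (k + 1) i) - f i (xstar i))
            + 3 * C ^ 2 * (α k) ^ 2) := Finset.sum_le_sum fun i _ => hper i
      _ = (∑ i, ‖y k i - xstar i‖ ^ 2)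
            + 2 * α k * (∑ i, (f i (x (k + 1) i) - f i (xstar i)))
            + n * (3 * C ^ 2 * (α k) ^ 2) := by
          rw [Finset.sum_add_distrib, Finset.sum_add_distrib, ← Finset.mul_sum,
            Finset.sum_const, nsmul_eq_mul, Finset.card_univ]
      _ ≤ D k + 2 * α k * (-(n * δ)) + n * (3 * C ^ 2 * (α k) ^ 2) := by
          have h1 := step1 k
          have h2 : 2 * α k * (∑ i, (f i (x (k + 1) i) - f i (xstar i)))
              ≤ 2 * α k * (-(n * δ)) :=
            mul_le_mul_of_nonneg_left hsum_le (by linarith [hα_pos k])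
          linarith
      _ = D k - (2 * n * δ) * α k + (3 * n * C ^ 2) * (α k) ^ 2 := by ring
  have hrec : ∀ K, D K + (2 * n * δ) * (∑ k ∈ Finset.range K, α k)
      ≤ D 0 + (3 * n * C ^ 2) * (∑ k ∈ Finset.range K, (α k) ^ 2) := by
    intro K
    induction K with
    | zero => simp
    | succ K ih =>
      rw [Finset.sum_range_succ, Finset.sum_range_succ]
      have h1 := key K
      linarith
  set T : ℝ := ∑' k, (α k) ^ 2 with hT_def
  have hTle : ∀ K, ∑ k ∈ Finset.range K, (α k) ^ 2 ≤ T :=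
    fun K => Summable.sum_le_tsum _ (fun _ _ => sq_nonneg _) hα_sq
  have hpos : 0 < 2 * n * δ := by positivity
  have hbd : ∀ K, ∑ k ∈ Finset.range K, α k
      ≤ (D 0 + (3 * n * C ^ 2) * T) / (2 * n * δ) := by
    intro K
    rw [le_div_iff₀ hpos]
    have h1 := hrec K
    have h2 : (3 * n * C ^ 2) * (∑ k ∈ Finset.range K, (α k) ^ 2)
        ≤ (3 * n * C ^ 2) * T :=
      mul_le_mul_of_nonneg_left (hTle K) (by positivity)
    have h3 := hD0 K
    linarith
  exact hα_div (summable_of_sum_range_le (fun k => (hα_pos k).le) hbd)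
end
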